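/- Let RM(α₁,...,αₙ) be a bi-rainbow meander with α = α₁ + ... + αₙ, and let Z(α₁,...,αₙ) denote its number of connected components (Jordan curves). Then Z(α₁,...,αₙ) is congruent modulo 2 to half the number of odd entries in the list (α₁,...,αₙ,α). -/

import Mathlib

open Equiv Equiv.Perm


/-- Upper-arc partner of point `k ∈ {1,…,2·sum}` in a meander whose upper arcs
form consecutive rainbow families of the given sizes (1-indexed points). -/
def upperPartner : List ℕ → ℕ → ℕ
  | [], k => k
  | a :: rest, k => if k ≤ 2 * a then 2 * a + 1 - k else 2 * a + upperPartner rest (k - 2 * a)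

/-- One step along the bi-rainbow meander: upper or lower partner. -/
def meanderRel (l : List ℕ) (x y : ℕ) : Prop :=
  y = upperPartner l x ∨ y = 2 * l.sum + 1 - x

/-- Connectivity relation on the points `{1,…,2α}` of the bi-rainbow meander `RM l`. -/
def meanderSetoid (l : List ℕ) : Setoid {k : ℕ // 1 ≤ k ∧ k ≤ 2 * l.sum} :=
  ⟨fun a b => Relation.EqvGen (fun a b => meanderRel l a.1 b.1) a b,
    Relation.EqvGen.is_equivalence _⟩

/-- Number of connected components (Jordan curves) of the bi-rainbow meander `RM l`. -/
noncomputable def Z (l : List ℕ) : ℕ := Nat.card (Quotient (meanderSetoid l))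

/-- index-level upper partner: `uIdx l i` is the index of the even endpoint paired to
the `i`-th odd point (and vice versa). -/
def uIdx : List ℕ → ℕ → ℕ
  | [], k => k
  | a :: rest, k => if k ≤ a then a + 1 - k else a + uIdx rest (k - a)

lemma uIdx_cons (a : ℕ) (rest : List ℕ) (k : ℕ) :
    uIdx (a :: rest) k = if k ≤ a then a + 1 - k else a + uIdx rest (k - a) := rfl

lemma uIdx_pos (l : List ℕ) {k : ℕ} (hk : 1 ≤ k) : 1 ≤ uIdx l k := by
  induction l generalizing k with
  | nil => exact hk
  | cons a rest ih =>
    unfold uIdx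
    split
    · omega
    · have := ih (k := k - a) (by omega)
      omega

lemma uIdx_le (l : List ℕ) {k : ℕ} (hk : 1 ≤ k) (hk2 : k ≤ l.sum) : uIdx l k ≤ l.sum := by
  induction l generalizing k with
  | nil => exact hk2
  | cons a rest ih =>
    unfold uIdx
    rw [List.sum_cons] at hk2 ⊢
    split
    · omega
    · have := ih (k := k - a) (by omega) (by omega)
      omega

lemma uIdx_invol (l : List ℕ) {k : ℕ} (hk : 1 ≤ k) (hk2 : k ≤ l.sum) :
    uIdx l (uIdx l k) = k := by
  induction l generalizing k with
  | nil => rfl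
  | cons a rest ih =>
    rw [List.sum_cons] at hk2
    by_cases h : k ≤ a
    · have e1 : uIdx (a :: rest) k = a + 1 - k := by rw [uIdx_cons, if_pos h]
      rw [e1, uIdx_cons, if_pos (by omega)]; omega
    · have e1 : uIdx (a :: rest) k = a + uIdx rest (k - a) := by rw [uIdx_cons, if_neg h]
      have h1 := uIdx_pos rest (k := k - a) (by omega)
      rw [e1, uIdx_cons, if_neg (by omega)]
      have e2 : a + uIdx rest (k - a) - a = uIdx rest (k - a) := by omega
      rw [e2, ih (by omega) (by omega)]; omega

lemma upperPartner_odd (l : List ℕ) {i : ℕ} (hi : 1 ≤ i) (hi2 : i ≤ l.sum) :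
    upperPartner l (2 * i - 1) = 2 * uIdx l i := by
  induction l generalizing i with
  | nil => simp at hi2; omega
  | cons a rest ih =>
    unfold upperPartner uIdx
    by_cases h : i ≤ a
    · rw [if_pos (by omega), if_pos h]; omega
    · rw [if_neg (by omega), if_neg h]
      have : 2 * i - 1 - 2 * a = 2 * (i - a) - 1 := by omega
      rw [this, ih (by omega) (by rw [List.sum_cons] at hi2; omega)]
      omega

lemma upperPartner_even (l : List ℕ) {j : ℕ} (hj : 1 ≤ j) (hj2 : j ≤ l.sum) :
    upperPartner l (2 * j) = 2 * uIdx l j - 1 := by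
  induction l generalizing j with
  | nil => simp at hj2; omega
  | cons a rest ih =>
    unfold upperPartner uIdx
    by_cases h : j ≤ a
    · rw [if_pos (by omega), if_pos h]; omega
    · rw [if_neg (by omega), if_neg h]
      have : 2 * j - 2 * a = 2 * (j - a) := by omega
      rw [this, ih (by omega) (by rw [List.sum_cons] at hj2; omega)]
      have := uIdx_pos rest (k := j - a) (by omega)
      omega

def blockRev : (l : List ℕ) → Equiv.Perm (Fin l.sum)
  | [] => 1
  | a :: rest => (finSumFinEquiv (m := a) (n := rest.sum)).permCongr
      ((Fin.revPerm (n := a)).sumCongr (blockRev rest))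

lemma blockRev_val : (l : List ℕ) → (x : Fin l.sum) → (blockRev l x : ℕ) = uIdx l (x + 1) - 1
  | [], x => absurd x.2 (by simp)
  | a :: rest, x => by
    have hx : blockRev (a :: rest) x
        = finSumFinEquiv ((Equiv.sumCongr (Fin.revPerm (n := a)) (blockRev rest))
            (finSumFinEquiv.symm x)) := rfl
    rw [hx]
    generalize hy : (finSumFinEquiv (m := a) (n := rest.sum)).symm x = y
    have hx2 : x = finSumFinEquiv (m := a) (n := rest.sum) y := by
      rw [← hy]; exact (Equiv.apply_symm_apply _ _).symm
    rcases y with j | j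
    · have hxj : (x : ℕ) = (j : ℕ) := by rw [hx2]; simp
      simp only [Equiv.sumCongr_apply, Sum.map_inl, finSumFinEquiv_apply_left, Fin.coe_castAdd]
      rw [uIdx_cons, if_pos (by omega), hxj]
      show ((j.rev : Fin a) : ℕ) = _
      rw [Fin.val_rev]
      omega
    · have hxj : (x : ℕ) = a + (j : ℕ) := by rw [hx2]; simp
      simp only [Equiv.sumCongr_apply, Sum.map_inr, finSumFinEquiv_apply_right, Fin.coe_natAdd]
      rw [uIdx_cons, if_neg (by omega), hxj]
      have e1 : a + (j : ℕ) + 1 - a = (j : ℕ) + 1 := by omega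
      rw [e1, blockRev_val rest j]
      have := uIdx_pos rest (k := (j : ℕ) + 1) (by omega)
      omega

lemma sign_blockRev_cons (a : ℕ) (rest : List ℕ) :
    sign (blockRev (a :: rest)) = sign (Fin.revPerm (n := a)) * sign (blockRev rest) := by
  show sign ((finSumFinEquiv (m := a) (n := rest.sum)).permCongr _) = _
  rw [Equiv.Perm.sign_permCongr, Equiv.Perm.sign_sumCongr]

lemma sign_revPerm_one : sign (Fin.revPerm (n := 1)) = 1 := by
  have : (Fin.revPerm (n := 1)) = 1 := Subsingleton.elim _ _
  rw [this, map_one]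

lemma sign_revPerm : (m : ℕ) → sign (Fin.revPerm (n := m)) = (-1) ^ (m / 2)
  | 0 => by
    have : (Fin.revPerm (n := 0)) = 1 := Subsingleton.elim _ _
    rw [this, map_one]; rfl
  | 1 => sign_revPerm_one
  | (m + 2) => by
    have hcast : [1, m, 1].sum = m + 2 := by simp; omega
    set mid : Equiv.Perm (Fin (m + 2)) := (finCongr hcast).permCongr (blockRev [1, m, 1]) with hmid
    have hval : ∀ x : Fin (m + 2), (mid x : ℕ) = uIdx [1, m, 1] ((x : ℕ) + 1) - 1 := by
      intro x
      show ((finCongr hcast) ((blockRev [1, m, 1]) ((finCongr hcast.symm) x)) : ℕ) = _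
      rw [finCongr_apply, Fin.coe_cast, blockRev_val]
      simp; rfl
    have key : (Fin.revPerm (n := m + 2))
        = Equiv.swap (0 : Fin (m + 2)) ⟨m + 1, by omega⟩ * mid := by
      ext x
      have hu : (mid x : ℕ) = uIdx [1, m, 1] ((x : ℕ) + 1) - 1 := hval x
      rw [Equiv.Perm.mul_apply]
      have hrev : ((Fin.revPerm x : Fin (m + 2)) : ℕ) = m + 1 - (x : ℕ) := by
        show ((x.rev : Fin (m+2)) : ℕ) = _
        rw [Fin.val_rev]; omega
      rcases Nat.lt_or_ge (x : ℕ) 1 with hx | hx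
      · -- x = 0
        have hx0 : (x : ℕ) = 0 := by omega
        have hmx : (mid x : ℕ) = 0 := by
          rw [hu, hx0]
          rw [uIdx_cons, if_pos (by omega)]
        have : mid x = (0 : Fin (m + 2)) := by
          apply Fin.ext; simpa using hmx
        rw [this, Equiv.swap_apply_left]
        rw [hrev]
        show m + 1 - (x : ℕ) = m + 1
        omega
      · rcases Nat.lt_or_ge (x : ℕ) (m + 1) with hx2 | hx2
        · -- middle
          have hmx : (mid x : ℕ) = m + 1 - (x : ℕ) := by
            rw [hu, uIdx_cons, if_neg (by omega)]
            rw [show (x:ℕ) + 1 - 1 = (x:ℕ) by omega]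
            rw [uIdx_cons, if_pos (by omega)]
            omega
          rw [Equiv.swap_apply_of_ne_of_ne]
          · rw [hrev, hmx]
          · intro hc; rw [hc] at hmx; simp at hmx; omega
          · intro hc; rw [hc] at hmx; simp at hmx; omega
        · -- x = m + 1
          have hx1 : (x : ℕ) = m + 1 := by omega
          have hmx : (mid x : ℕ) = m + 1 := by
            rw [hu, hx1, uIdx_cons, if_neg (by omega)]
            rw [show m + 1 + 1 - 1 = m + 1 by omega]
            rw [uIdx_cons, if_neg (by omega)]
            rw [show m + 1 - m = 1 by omega, uIdx_cons, if_pos (by omega)]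
            omega
          have : mid x = (⟨m + 1, by omega⟩ : Fin (m + 2)) := by
            apply Fin.ext; simpa using hmx
          rw [this, Equiv.swap_apply_right]
          rw [hrev]
          simp
          omega
    have hs1 : sign (Fin.revPerm (n := m + 2)) = -sign mid := by
      rw [key, map_mul, Equiv.Perm.sign_swap (by intro hc; have := congrArg Fin.val hc; simp at this)]
      rw [neg_one_mul]
    have hs2 : sign mid = (-1) ^ (m / 2) := by
      rw [hmid, Equiv.Perm.sign_permCongr]
      rw [sign_blockRev_cons, sign_blockRev_cons, sign_blockRev_cons]
      have h0 : sign (blockRev []) = 1 := by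
        show sign (1 : Equiv.Perm (Fin 0)) = 1; rw [map_one]
      rw [h0, sign_revPerm_one, sign_revPerm m]
      simp
    rw [hs1, hs2, show (m + 2) / 2 = m / 2 + 1 from by omega, pow_succ, mul_neg_one]


section Orbits

variable {β : Type*} [Fintype β] [DecidableEq β]

def orbitSetoid (σ : Equiv.Perm β) : Setoid β :=
  ⟨σ.SameCycle, Equiv.Perm.SameCycle.equivalence σ⟩

lemma eqvGen_iff_sameCycle (σ : Equiv.Perm β) (x y : β) :
    Relation.EqvGen (fun a b => b = σ a) x y ↔ σ.SameCycle x y := by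
  constructor
  · intro h
    induction h with
    | rel a b hab => exact ⟨1, by simp [hab.symm]⟩
    | refl a => exact Equiv.Perm.SameCycle.refl _ _
    | symm a b _ ih => exact ih.symm
    | trans a b c _ _ ih1 ih2 => exact ih1.trans ih2
  · intro h
    obtain ⟨i, hi, hpow⟩ := h.exists_pow_eq'
    subst hpow
    clear hi h
    induction i with
    | zero => simpa using Relation.EqvGen.refl x
    | succ n ih =>
      refine Relation.EqvGen.trans _ _ _ ih (Relation.EqvGen.rel _ _ ?_)
      rw [pow_succ', Equiv.Perm.mul_apply]

variable (σ : Equiv.Perm β)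

/-- Classify a point: fixed point, or cycle factor through it. -/
def classify (x : β) : ({x : β // σ x = x} ⊕ {c // c ∈ σ.cycleFactorsFinset}) :=
  if h : σ x = x then Sum.inl ⟨x, h⟩ else
    Sum.inr ⟨σ.cycleOf x, Equiv.Perm.cycleOf_mem_cycleFactorsFinset_iff.2 (by
      simp [Equiv.Perm.mem_support, h])⟩

lemma classify_fixed {x : β} (hx : σ x = x) : classify σ x = Sum.inl ⟨x, hx⟩ := by
  unfold classify; rw [dif_pos hx]

lemma classify_moved {x : β} (hx : ¬ σ x = x) :
    classify σ x = Sum.inr ⟨σ.cycleOf x, Equiv.Perm.cycleOf_mem_cycleFactorsFinset_iff.2 (by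
      simp [Equiv.Perm.mem_support, hx])⟩ := by
  unfold classify; rw [dif_neg hx]

lemma support_choice {c : Equiv.Perm β} (hc : c ∈ σ.cycleFactorsFinset) :
    c.support.Nonempty :=
  (Equiv.Perm.mem_cycleFactorsFinset_iff.1 hc).1.nonempty_support

noncomputable def orbitEquiv :
    Quotient (orbitSetoid σ) ≃ ({x : β // σ x = x} ⊕ {c // c ∈ σ.cycleFactorsFinset}) where
  toFun := Quotient.lift (classify σ)
    (by
      intro x y hxy
      change σ.SameCycle x y at hxy
      by_cases hx : σ x = x
      · have hy : x = y := hxy.eq_of_left hx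
        subst hy; rfl
      · have hy : ¬ σ y = y := by
          intro hy; exact hx ((hxy.apply_eq_self_iff).2 hy)
        rw [classify_moved σ hx, classify_moved σ hy]
        simp only [Sum.inr.injEq, Subtype.mk_eq_mk]
        exact hxy.cycleOf_eq)
  invFun := Sum.elim (fun x => ⟦x.1⟧)
    (fun c => ⟦(support_choice σ c.2).choose⟧)
  left_inv := fun q => Quotient.inductionOn q (by
    intro x
    show Sum.elim _ _ (classify σ x) = _
    by_cases hx : σ x = x
    · rw [classify_fixed σ hx]
      rfl
    · rw [classify_moved σ hx]
      simp only [Sum.elim_inr]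
      apply Quotient.sound
      change σ.SameCycle _ x
      have hmem := (support_choice σ (Equiv.Perm.cycleOf_mem_cycleFactorsFinset_iff.2
        (show x ∈ σ.support by simp [Equiv.Perm.mem_support, hx]))).choose_spec
      rw [Equiv.Perm.mem_support_cycleOf_iff] at hmem
      exact hmem.1.symm)
  right_inv := by
    rintro (⟨x, hx⟩ | ⟨c, hc⟩)
    · show Quotient.lift (classify σ) _ ⟦x⟧ = _
      rw [Quotient.lift_mk, classify_fixed σ hx]
    · simp only [Sum.elim_inr]
      show Quotient.lift (classify σ) _ ⟦_⟧ = _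
      rw [Quotient.lift_mk]
      set y := (support_choice σ hc).choose with hy
      have hmem : y ∈ c.support := (support_choice σ hc).choose_spec
      have hcy : c = σ.cycleOf y := Equiv.Perm.cycle_is_cycleOf hmem hc
      have hyne : ¬ σ y = y := by
        obtain ⟨hcyc, hag⟩ := Equiv.Perm.mem_cycleFactorsFinset_iff.1 hc
        have h1 : c y ≠ y := Equiv.Perm.mem_support.1 hmem
        rw [hag y hmem] at h1
        exact h1
      rw [classify_moved σ hyne]
      simp only [Sum.inr.injEq, Subtype.mk_eq_mk]
      exact hcy.symm

lemma card_orbits : Nat.card (Quotient (orbitSetoid σ))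
    = (Fintype.card β - σ.support.card) + Multiset.card σ.cycleType := by
  rw [Nat.card_congr (orbitEquiv σ), Nat.card_sum]
  congr 1
  · rw [Nat.card_eq_fintype_card, Fintype.card_subtype]
    have : Finset.filter (fun x => σ x = x) Finset.univ = Finset.univ \ σ.support := by
      ext a; simp [Equiv.Perm.mem_support]
    rw [this, Finset.card_sdiff_of_subset (Finset.subset_univ _), Finset.card_univ]
  · rw [Nat.card_eq_fintype_card, Fintype.card_coe, Equiv.Perm.cycleType_def,
      Multiset.card_map]
    rfl

lemma sign_eq_card_orbits : Equiv.Perm.sign σ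
    = (-1) ^ (Fintype.card β + Nat.card (Quotient (orbitSetoid σ))) := by
  rw [Equiv.Perm.sign_of_cycleType, card_orbits, Equiv.Perm.sum_cycleType]
  have hsupp : σ.support.card ≤ Fintype.card β := Finset.card_le_univ _
  obtain ⟨k, hk⟩ : ∃ k, Fintype.card β = σ.support.card + k := ⟨_, (Nat.add_sub_cancel' hsupp).symm⟩
  rw [hk]
  have : σ.support.card + k + (σ.support.card + k - σ.support.card + Multiset.card σ.cycleType)
      = (σ.support.card + Multiset.card σ.cycleType) + 2 * k := by omega
  rw [this]
  have h2 : ((-1 : ℤˣ)) ^ (σ.support.card + Multiset.card σ.cycleType + 2 * k)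
      = (-1) ^ σ.support.card * (-1) ^ Multiset.card σ.cycleType
        * ((-1) ^ 2) ^ k := by
    rw [← pow_mul, ← pow_add, ← pow_add]
  rw [h2]
  norm_num
  rw [pow_add]


end Orbits

def meanderPerm (l : List ℕ) : Equiv.Perm (Fin l.sum) := (blockRev l).trans Fin.revPerm

lemma meanderPerm_val (l : List ℕ) (x : Fin l.sum) :
    (meanderPerm l x : ℕ) = l.sum - uIdx l ((x : ℕ) + 1) := by
  have h1 := blockRev_val l x
  have h2 := uIdx_pos l (k := (x : ℕ) + 1) (by omega)
  show ((Fin.rev (blockRev l x)) : ℕ) = _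
  rw [Fin.val_rev, h1]
  omega

lemma sign_meanderPerm (l : List ℕ) :
    Equiv.Perm.sign (meanderPerm l) = (-1) ^ (l.sum / 2 + (l.map (fun a => a / 2)).sum) := by
  have hb : ∀ m : List ℕ, Equiv.Perm.sign (blockRev m) = (-1) ^ ((m.map (fun a => a / 2)).sum) := by
    intro m
    induction m with
    | nil => show Equiv.Perm.sign (1 : Equiv.Perm (Fin 0)) = _; rw [map_one]; rfl
    | cons a rest ih =>
      rw [sign_blockRev_cons, ih, sign_revPerm]
      rw [List.map_cons, List.sum_cons, pow_add]
  have : meanderPerm l = Fin.revPerm * blockRev l := rfl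
  rw [this, map_mul, sign_revPerm, hb, pow_add]

section MainEquiv

variable (l : List ℕ)

/-- Forward map from meander points to odd-point indices (0-based). -/
def meanderIdx (x : {k : ℕ // 1 ≤ k ∧ k ≤ 2 * l.sum}) : Fin l.sum :=
  if h : (x : ℕ) % 2 = 1 then ⟨((x : ℕ) + 1) / 2 - 1, by obtain ⟨k, hk⟩ := x; simp at h ⊢; omega⟩
  else ⟨l.sum - (x : ℕ) / 2, by obtain ⟨k, hk⟩ := x; simp at h ⊢; omega⟩

lemma meanderIdx_odd {x : {k : ℕ // 1 ≤ k ∧ k ≤ 2 * l.sum}} (h : (x : ℕ) % 2 = 1) :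
    (meanderIdx l x : ℕ) = ((x : ℕ) + 1) / 2 - 1 := by
  unfold meanderIdx; rw [dif_pos h]

lemma meanderIdx_even {x : {k : ℕ // 1 ≤ k ∧ k ≤ 2 * l.sum}} (h : ¬ (x : ℕ) % 2 = 1) :
    (meanderIdx l x : ℕ) = l.sum - (x : ℕ) / 2 := by
  unfold meanderIdx; rw [dif_neg h]

lemma meanderIdx_step {x y : {k : ℕ // 1 ≤ k ∧ k ≤ 2 * l.sum}}
    (hxy : meanderRel l (x : ℕ) (y : ℕ)) :
    (meanderPerm l).SameCycle (meanderIdx l x) (meanderIdx l y) := by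
  obtain ⟨k, hk1, hk2⟩ := x
  obtain ⟨m, hm1, hm2⟩ := y
  rcases hxy with hU | hD
  all_goals first
    | (replace hU : m = upperPartner l k := hU)
    | (replace hD : m = 2 * l.sum + 1 - k := hD)
  · -- upper arc
    by_cases hodd : k % 2 = 1
    · -- k odd, k = 2 i - 1 with i = (k+1)/2
      set i := (k + 1) / 2 with hi
      have hki : k = 2 * i - 1 := by omega
      have hup : m = 2 * uIdx l i := by
        rw [hU, hki, upperPartner_odd l (by omega) (by omega)]
      have hu1 : 1 ≤ uIdx l i := uIdx_pos l (by omega)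
      have hu2 : uIdx l i ≤ l.sum := uIdx_le l (by omega) (by omega)
      have hmeven : ¬ m % 2 = 1 := by omega
      refine ⟨1, ?_⟩
      simp only [zpow_one]
      apply Fin.ext
      rw [meanderPerm_val, meanderIdx_odd l (x := ⟨k, hk1, hk2⟩) hodd,
        meanderIdx_even l (x := ⟨m, hm1, hm2⟩) hmeven]
      dsimp only
      rw [show ((k + 1) / 2 - 1) + 1 = i by omega]
      omega
    · -- k even, k = 2 j
      set j := k / 2 with hj
      have hkj : k = 2 * j := by omega
      have hup : m = 2 * uIdx l j - 1 := by
        rw [hU, hkj, upperPartner_even l (by omega) (by omega)]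
      have hu1 : 1 ≤ uIdx l j := uIdx_pos l (by omega)
      have hu2 : uIdx l j ≤ l.sum := uIdx_le l (by omega) (by omega)
      have hmodd : m % 2 = 1 := by omega
      have hinv : uIdx l (uIdx l j) = j := uIdx_invol l (by omega) (by omega)
      refine Equiv.Perm.SameCycle.symm ⟨1, ?_⟩
      simp only [zpow_one]
      apply Fin.ext
      rw [meanderPerm_val, meanderIdx_odd l (x := ⟨m, hm1, hm2⟩) hmodd,
        meanderIdx_even l (x := ⟨k, hk1, hk2⟩) hodd]
      dsimp only
      rw [show ((m + 1) / 2 - 1) + 1 = uIdx l j by omega]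
      omega
  · -- lower arc: images are equal
    have : meanderIdx l ⟨k, hk1, hk2⟩ = meanderIdx l ⟨m, hm1, hm2⟩ := by
      apply Fin.ext
      by_cases hodd : k % 2 = 1
      · have hmeven : ¬ m % 2 = 1 := by omega
        rw [meanderIdx_odd l (x := ⟨k, hk1, hk2⟩) hodd,
          meanderIdx_even l (x := ⟨m, hm1, hm2⟩) hmeven]
        dsimp only
        omega
      · have hmodd : m % 2 = 1 := by omega
        rw [meanderIdx_even l (x := ⟨k, hk1, hk2⟩) hodd,
          meanderIdx_odd l (x := ⟨m, hm1, hm2⟩) hmodd]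
        dsimp only
        omega
    rw [this]

/-- Backward raw map: index `j` to the odd point `2 j + 1`. -/
def oddPoint (j : Fin l.sum) : {k : ℕ // 1 ≤ k ∧ k ≤ 2 * l.sum} :=
  ⟨2 * (j : ℕ) + 1, by obtain ⟨j, hj⟩ := j; simp; omega⟩

lemma oddPoint_step (j : Fin l.sum) :
    (⟦oddPoint l j⟧ : Quotient (meanderSetoid l)) = ⟦oddPoint l (meanderPerm l j)⟧ := by
  have hj1 : 1 ≤ (j : ℕ) + 1 := by omega
  have hj2 : (j : ℕ) + 1 ≤ l.sum := j.2
  have hu1 : 1 ≤ uIdx l ((j : ℕ) + 1) := uIdx_pos l hj1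
  have hu2 : uIdx l ((j : ℕ) + 1) ≤ l.sum := uIdx_le l hj1 hj2
  set u := uIdx l ((j : ℕ) + 1) with hu
  have hy1 : (1 : ℕ) ≤ 2 * u ∧ 2 * u ≤ 2 * l.sum := by omega
  apply Quotient.sound
  refine Relation.EqvGen.trans _ (⟨2 * u, hy1⟩ : {k : ℕ // 1 ≤ k ∧ k ≤ 2 * l.sum}) _
    (Relation.EqvGen.rel _ _ ?_) (Relation.EqvGen.rel _ _ ?_)
  · left
    show (2 * u : ℕ) = upperPartner l (2 * (j : ℕ) + 1)
    rw [show 2 * (j : ℕ) + 1 = 2 * ((j : ℕ) + 1) - 1 by omega,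
      upperPartner_odd l hj1 hj2]
  · right
    show (2 * ((meanderPerm l j : ℕ)) + 1 : ℕ) = 2 * l.sum + 1 - 2 * u
    rw [meanderPerm_val]
    omega

lemma oddPoint_pow (n : ℕ) (j : Fin l.sum) :
    (⟦oddPoint l j⟧ : Quotient (meanderSetoid l)) = ⟦oddPoint l (((meanderPerm l) ^ n) j)⟧ := by
  induction n with
  | zero => simp
  | succ n ih =>
    rw [ih, oddPoint_step l (((meanderPerm l) ^ n) j)]
    rw [pow_succ', Equiv.Perm.mul_apply]

noncomputable def meanderOrbitEquiv :
    Quotient (meanderSetoid l) ≃ Quotient (orbitSetoid (meanderPerm l)) where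
  toFun := Quotient.lift (fun x => (⟦meanderIdx l x⟧ : Quotient (orbitSetoid (meanderPerm l))))
    (by
      intro a b hab
      change Relation.EqvGen _ a b at hab
      induction hab with
      | rel a b h => exact Quotient.sound (meanderIdx_step l h)
      | refl a => rfl
      | symm a b _ ih => exact ih.symm
      | trans a b c _ _ ih1 ih2 => exact ih1.trans ih2)
  invFun := Quotient.lift (fun j => (⟦oddPoint l j⟧ : Quotient (meanderSetoid l)))
    (by
      intro a b hab
      change (meanderPerm l).SameCycle a b at hab
      obtain ⟨n, _, hpow⟩ := hab.exists_pow_eq'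
      rw [← hpow]
      exact oddPoint_pow l n a)
  left_inv := fun q => Quotient.inductionOn q (by
    intro x
    show (⟦oddPoint l (meanderIdx l x)⟧ : Quotient (meanderSetoid l)) = ⟦x⟧
    obtain ⟨k, hk1, hk2⟩ := x
    by_cases hodd : k % 2 = 1
    · congr 1
      apply Subtype.ext
      show 2 * (meanderIdx l ⟨k, hk1, hk2⟩ : ℕ) + 1 = k
      rw [meanderIdx_odd l hodd]
      dsimp only
      omega
    · have : oddPoint l (meanderIdx l ⟨k, hk1, hk2⟩)
          = ⟨2 * l.sum + 1 - k, by constructor <;> omega⟩ := by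
        apply Subtype.ext
        show 2 * (meanderIdx l ⟨k, hk1, hk2⟩ : ℕ) + 1 = 2 * l.sum + 1 - k
        rw [meanderIdx_even l hodd]
        dsimp only
        omega
      rw [this]
      symm
      apply Quotient.sound
      apply Relation.EqvGen.rel
      right
      rfl)
  right_inv := fun q => Quotient.inductionOn q (by
    intro j
    show (⟦meanderIdx l (oddPoint l j)⟧ : Quotient (orbitSetoid (meanderPerm l))) = ⟦j⟧
    congr 1
    apply Fin.ext
    rw [meanderIdx_odd l (by show (2 * (j : ℕ) + 1) % 2 = 1; omega)]
    show (2 * (j : ℕ) + 1 + 1) / 2 - 1 = (j : ℕ)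
    omega)

end MainEquiv

lemma neg_one_pow_parity {A B : ℕ} (h : (-1 : ℤˣ) ^ A = (-1 : ℤˣ) ^ B) : A % 2 = B % 2 := by
  have h' : ((-1 : ℤ)) ^ A = (-1 : ℤ) ^ B := by
    have := congrArg (Units.val) h
    simpa using this
  have h1 : ((-1 : ℤ)) ^ (A + B) = 1 := by
    rw [pow_add, h', ← pow_add, ← two_mul, pow_mul]
    norm_num
  have h2 : Even (A + B) := by
    have := neg_one_pow_eq_one_iff_even (R := ℤ) (by norm_num) |>.1 h1
    exact this
  obtain ⟨c, hc⟩ := h2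
  omega

lemma sum_split (l : List ℕ) :
    l.sum = 2 * (l.map (fun a => a / 2)).sum + l.countP (fun x => x % 2 = 1) := by
  induction l with
  | nil => rfl
  | cons a rest ih =>
    rw [List.sum_cons, List.map_cons, List.sum_cons, List.countP_cons, ih]
    by_cases h : a % 2 = 1
    · simp [h]; omega
    · simp [h]; omega

theorem Z_parity (l : List ℕ) (hpos : ∀ x ∈ l, 0 < x) (hne : l ≠ []) :
    Z l % 2 = ((l.sum :: l).countP (fun x => x % 2 = 1) / 2) % 2 := by
  have hZ : Z l = Nat.card (Quotient (orbitSetoid (meanderPerm l))) :=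
    Nat.card_congr (meanderOrbitEquiv l)
  have hsign := sign_eq_card_orbits (meanderPerm l)
  rw [← hZ, sign_meanderPerm, Fintype.card_fin] at hsign
  have hpar : (l.sum / 2 + (l.map (fun a => a / 2)).sum) % 2 = (l.sum + Z l) % 2 :=
    neg_one_pow_parity hsign
  have hsum := sum_split l
  rw [List.countP_cons]
  set s := l.sum
  set D := (l.map (fun a => a / 2)).sum
  set t := l.countP (fun x => x % 2 = 1)
  have hite : (if decide (s % 2 = 1) = true then 1 else 0 : ℕ) = s % 2 := by
    by_cases hs : s % 2 = 1
    · simp [hs]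
    · simp [hs]; omega
  rw [hite]
  omega
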